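/- For every integer k ≥ 3, with n = 2k, z the k-coloring of {1,…,2k} with z(u) ≡ u (mod k), and (d_k; c_k) as specified, the simple fiber F̃(d_k; c_k) = {γ ∈ {0,1}^P : DC_{2k,z} γ = (d_k; c_k)} contains exactly two elements γ₁ and γ₂, and ‖γ₁ − γ₂‖₁ = 2k. -/

import Mathlib

open Finset

/-- The set `P` of 2-element subsets of `{1,…,n}`, encoded as ordered pairs. -/
abbrev Edge (n : ℕ) : Type := {p : Fin n × Fin n // p.1 < p.2}

/-- Entry `γ_{uv}` of a vector `γ ∈ ℤ^P` at the unordered pair `{u,v}` (0 when `u = v`). -/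
def ent {n : ℕ} (γ : Edge n → ℤ) (u v : Fin n) : ℤ :=
  if h : u < v then γ ⟨(u, v), h⟩ else if h : v < u then γ ⟨(v, u), h⟩ else 0

/-- Entry at `{u,v}` of a vector in `ℕ^P`. -/
def entN {n : ℕ} (x : Edge n → ℕ) (u v : Fin n) : ℕ :=
  if h : u < v then x ⟨(u, v), h⟩ else if h : v < u then x ⟨(v, u), h⟩ else 0

/-- Degree sequence: `d(γ)_u = ∑_{v ≠ u} γ_{uv}`. -/
def degSeq {n : ℕ} (γ : Edge n → ℤ) (u : Fin n) : ℤ := ∑ v, ent γ u v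

/-- Color sequence: `c(γ)_{ij} = ∑ γ_{uv}` over `{u,v} ∈ P` with `{z u, z v} = {i,j}`. -/
def colorSeq {n k : ℕ} (z : Fin n → Fin k) (γ : Edge n → ℤ) (i j : Fin k) : ℤ :=
  ∑ e : Edge n,
    if (z e.1.1 = i ∧ z e.1.2 = j) ∨ (z e.1.1 = j ∧ z e.1.2 = i) then γ e else 0

/-- `γ ∈ ker_ℤ DC_{n,z}`: both the degree sequence and the color sequence vanish. -/
def inKer {n k : ℕ} (z : Fin n → Fin k) (γ : Edge n → ℤ) : Prop :=
  (∀ u, degSeq γ u = 0) ∧ ∀ i j, colorSeq z γ i j = 0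

/-- The 1-norm `‖γ‖₁ = ∑_{e ∈ P} |γ_e|`. -/
def norm1 {n : ℕ} (γ : Edge n → ℤ) : ℤ := ∑ e, |γ e|

/-- The set of moves `M_{n,z} = {γ ∈ ker_ℤ DC_{n,z} : ‖γ‖₁ = 4}`. -/
def MSet {n k : ℕ} (z : Fin n → Fin k) : Set (Edge n → ℤ) :=
  {γ | inKer z γ ∧ norm1 γ = 4}

/-- Degree sequence of a vector in `ℕ^P`. -/
def degSeqN {n : ℕ} (x : Edge n → ℕ) (u : Fin n) : ℕ := ∑ v, entN x u v

/-- Color sequence of a vector in `ℕ^P`. -/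
def colorSeqN {n k : ℕ} (z : Fin n → Fin k) (x : Edge n → ℕ) (i j : Fin k) : ℕ :=
  ∑ e : Edge n,
    if (z e.1.1 = i ∧ z e.1.2 = j) ∨ (z e.1.1 = j ∧ z e.1.2 = i) then x e else 0

/-- The fiber `F(b) = {x ∈ ℕ^P : DC_{n,z} x = b}`, where `b = (d; c)`. -/
def Fiber {n k : ℕ} (z : Fin n → Fin k) (d : Fin n → ℤ) (c : Fin k → Fin k → ℤ) :
    Set (Edge n → ℕ) :=
  {x | (∀ u, (degSeqN x u : ℤ) = d u) ∧ ∀ i j, (colorSeqN z x i j : ℤ) = c i j}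

/-- The simple fiber `F̃(b) = F(b) ∩ {0,1}^P`. -/
def SimpleFiber {n k : ℕ} (z : Fin n → Fin k) (d : Fin n → ℤ) (c : Fin k → Fin k → ℤ) :
    Set (Edge n → ℕ) :=
  {x | x ∈ Fiber z d c ∧ ∀ e, x e ≤ 1}

/-- The difference `x − x' ∈ ℤ^P` of two vectors in `ℕ^P`. -/
def diff {n : ℕ} (x x' : Edge n → ℕ) : Edge n → ℤ := fun e => (x e : ℤ) - (x' e : ℤ)


lemma sum_support_four {α M : Type*} [Fintype α] [DecidableEq α] [AddCommMonoid M] (f : α → M)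
    (w1 w2 w3 w4 : α) (h12 : w1 ≠ w2) (h13 : w1 ≠ w3) (h14 : w1 ≠ w4) (h23 : w2 ≠ w3)
    (h24 : w2 ≠ w4) (h34 : w3 ≠ w4)
    (h0 : ∀ v, v ≠ w1 → v ≠ w2 → v ≠ w3 → v ≠ w4 → f v = 0) :
    ∑ v, f v = f w1 + f w2 + f w3 + f w4 := by
  have h : ∑ v ∈ ({w1, w2, w3, w4} : Finset α), f v = ∑ v, f v := by
    apply Finset.sum_subset (Finset.subset_univ _)
    intro v _ hv
    simp only [Finset.mem_insert, Finset.mem_singleton, not_or] at hv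
    exact h0 v hv.1 hv.2.1 hv.2.2.1 hv.2.2.2
  rw [← h]
  rw [Finset.sum_insert (by simp [h12, h13, h14]), Finset.sum_insert (by simp [h23, h24]),
    Finset.sum_insert (by simp [h34]), Finset.sum_singleton]
  abel

lemma sum_support_two {α M : Type*} [Fintype α] [DecidableEq α] [AddCommMonoid M] (f : α → M)
    (w1 w2 : α) (h12 : w1 ≠ w2)
    (h0 : ∀ v, v ≠ w1 → v ≠ w2 → f v = 0) :
    ∑ v, f v = f w1 + f w2 := by
  have h : ∑ v ∈ ({w1, w2} : Finset α), f v = ∑ v, f v := by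
    apply Finset.sum_subset (Finset.subset_univ _)
    intro v _ hv
    simp only [Finset.mem_insert, Finset.mem_singleton, not_or] at hv
    exact h0 v hv.1 hv.2
  rw [← h, Finset.sum_insert (by simp [h12]), Finset.sum_singleton]

lemma sum_sym {n : ℕ} {M : Type*} [AddCommMonoid M] (F : Fin n → Fin n → M)
    (hsymm : ∀ u v, F u v = F v u) (hdiag : ∀ u, F u u = 0) :
    ∑ u, ∑ v, F u v = (∑ e : Edge n, F e.1.1 e.1.2) + ∑ e : Edge n, F e.1.1 e.1.2 := by
  classical
  have hsub : ∑ e : Edge n, F e.1.1 e.1.2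
      = ∑ p ∈ Finset.univ.filter (fun p : Fin n × Fin n => p.1 < p.2), F p.1 p.2 := by
    rw [Finset.sum_subtype (p := fun p : Fin n × Fin n => p.1 < p.2)
      (Finset.univ.filter (fun p : Fin n × Fin n => p.1 < p.2)) (by simp) (fun p => F p.1 p.2)]
  have key : ∀ p : Fin n × Fin n, F p.1 p.2 =
      (if p.1 < p.2 then F p.1 p.2 else 0) + (if p.2 < p.1 then F p.1 p.2 else 0) := by
    intro p
    rcases lt_trichotomy p.1 p.2 with h | h | h
    · simp [h, asymm h]
    · simp [h, hdiag, lt_irrefl]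
    · simp [h, asymm h]
  calc ∑ u, ∑ v, F u v = ∑ p : Fin n × Fin n, F p.1 p.2 := by rw [Fintype.sum_prod_type]
    _ = ∑ p : Fin n × Fin n, ((if p.1 < p.2 then F p.1 p.2 else 0)
          + (if p.2 < p.1 then F p.1 p.2 else 0)) := Finset.sum_congr rfl (fun p _ => key p)
    _ = (∑ p : Fin n × Fin n, if p.1 < p.2 then F p.1 p.2 else 0)
          + ∑ p : Fin n × Fin n, if p.2 < p.1 then F p.1 p.2 else 0 := Finset.sum_add_distrib
    _ = (∑ e : Edge n, F e.1.1 e.1.2) + ∑ e : Edge n, F e.1.1 e.1.2 := by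
        have hswap : (∑ p : Fin n × Fin n, if p.2 < p.1 then F p.1 p.2 else 0)
            = ∑ p : Fin n × Fin n, if p.1 < p.2 then F p.1 p.2 else 0 := by
          apply Fintype.sum_equiv (Equiv.prodComm (Fin n) (Fin n))
          intro p
          simp [Equiv.prodComm, hsymm p.1 p.2]
          exact if_congr Iff.rfl rfl rfl
        rw [hswap, hsub, Finset.sum_filter]

section Work
variable {k : ℕ}

/-- The vertex `a_{i mod k}` (resp. with `+k`, `b_{i mod k}`). -/
def AV (hk : 3 ≤ k) (i : ℕ) : Fin (2*k) := ⟨i % k, by have := Nat.mod_lt i (y := k) (Nat.lt_of_lt_of_le (by decide) hk); omega⟩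
def BV (hk : 3 ≤ k) (i : ℕ) : Fin (2*k) := ⟨i % k + k, by have := Nat.mod_lt i (y := k) (Nat.lt_of_lt_of_le (by decide) hk); omega⟩

lemma AV_val (hk : 3 ≤ k) (i : ℕ) : (AV hk i).val = i % k := rfl
lemma BV_val (hk : 3 ≤ k) (i : ℕ) : (BV hk i).val = i % k + k := rfl

lemma modc {t : ℕ} (hk : 3 ≤ k) (ht : t < 2*k) : (t % k = t ∧ t < k) ∨ (t % k = t - k ∧ k ≤ t) := by
  rcases lt_or_ge t k with h | h
  · exact Or.inl ⟨Nat.mod_eq_of_lt h, h⟩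
  · exact Or.inr ⟨by rw [Nat.mod_eq_sub_mod h, Nat.mod_eq_of_lt (by omega)], h⟩

lemma mod_small (hk : 3 ≤ k) {t : ℕ} (ht : t < k) : t % k = t := Nat.mod_eq_of_lt ht

lemma mod_bound (hk : 3 ≤ k) (t : ℕ) : t % k < k := Nat.mod_lt t (by omega)

lemma mod_succ (hk : 3 ≤ k) (i : ℕ) : (i+1) % k = (i % k + 1) % k := by
  conv_lhs => rw [← Nat.mod_add_mod]

lemma mod_succ_cases (hk : 3 ≤ k) (i : ℕ) :
    ((i+1) % k = i % k + 1 ∧ i % k + 1 < k) ∨ ((i+1) % k = 0 ∧ i % k + 1 = k) := by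
  rw [mod_succ hk]
  have h := mod_bound hk i
  rcases lt_or_ge (i % k + 1) k with h1 | h1
  · exact Or.inl ⟨Nat.mod_eq_of_lt h1, h1⟩
  · have h2 : i % k + 1 = k := by omega
    rw [h2]
    exact Or.inr ⟨Nat.mod_self k, rfl⟩

lemma mod_two_cases (hk : 3 ≤ k) (i : ℕ) :
    ((i+2) % k = i % k + 2 ∧ i % k + 2 < k) ∨ ((i+2) % k = i % k + 2 - k ∧ k ≤ i % k + 2) := by
  have h1 : (i+2) % k = (i % k + 2) % k := by conv_lhs => rw [← Nat.mod_add_mod]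
  rw [h1]
  exact modc hk (by have := mod_bound hk i; omega)

lemma mod_period (hk : 3 ≤ k) (i : ℕ) : (i + k) % k = i % k := Nat.add_mod_right i k

/-- mod-k successor is injective / basic separations -/
lemma succ_mod_ne (hk : 3 ≤ k) (i : ℕ) : (i+1) % k ≠ i % k := by
  rcases mod_succ_cases hk i with ⟨h1, h2⟩ | ⟨h1, h2⟩ <;> have := mod_bound hk i <;> omega

lemma two_mod_ne (hk : 3 ≤ k) (i : ℕ) : (i+2) % k ≠ i % k := by
  rcases mod_two_cases hk i with ⟨h1, h2⟩ | ⟨h1, h2⟩ <;> have := mod_bound hk i <;> omega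

lemma succ_mod_inj (hk : 3 ≤ k) {a b : ℕ} (ha : a < k) (hb : b < k)
    (h : (a+1) % k = (b+1) % k) : a = b := by
  rcases mod_succ_cases hk a with ⟨h1, h2⟩ | ⟨h1, h2⟩ <;>
    rcases mod_succ_cases hk b with ⟨h3, h4⟩ | ⟨h3, h4⟩ <;>
      rw [mod_small hk ha] at * <;> rw [mod_small hk hb] at * <;> omega

/- basic entN facts -/
lemma entN_symm {n : ℕ} (x : Edge n → ℕ) (u v : Fin n) : entN x u v = entN x v u := by
  unfold entN
  rcases lt_trichotomy u v with h | h | h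
  · rw [dif_pos h, dif_neg (asymm h), dif_pos h]
  · subst h; rfl
  · rw [dif_neg (asymm h), dif_pos h, dif_pos h]

lemma entN_diag {n : ℕ} (x : Edge n → ℕ) (u : Fin n) : entN x u u = 0 := by
  unfold entN
  rw [dif_neg (lt_irrefl u), dif_neg (lt_irrefl u)]

lemma entN_edge {n : ℕ} (x : Edge n → ℕ) {u v : Fin n} (h : u < v) :
    entN x u v = x ⟨(u, v), h⟩ := dif_pos h

lemma entN_le_one {n : ℕ} (x : Edge n → ℕ) (hx : ∀ e, x e ≤ 1) (u v : Fin n) :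
    entN x u v ≤ 1 := by
  unfold entN
  split
  · apply hx
  · split
    · apply hx
    · omega

/-- If a color-count is zero, every entry with those colors is zero. -/
lemma color_zero {k : ℕ} {z : Fin (2*k) → Fin k} (x : Edge (2*k) → ℕ) (i j : Fin k)
    (h : colorSeqN z x i j = 0) (u v : Fin (2*k)) (hu : z u = i) (hv : z v = j) :
    entN x u v = 0 := by
  have hall := (Finset.sum_eq_zero_iff.mp h)
  rcases lt_trichotomy u v with huv | huv | huv
  · rw [entN_edge x huv]
    have := hall ⟨(u, v), huv⟩ (Finset.mem_univ _)
    simpa [hu, hv] using this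
  · subst huv; exact entN_diag x u
  · rw [entN_symm, entN_edge x huv]
    have := hall ⟨(v, u), huv⟩ (Finset.mem_univ _)
    simpa [hu, hv] using this
end Work
section Work2
variable {k : ℕ}

lemma AV_ne_BV (hk : 3 ≤ k) (a b : ℕ) : AV hk a ≠ BV hk b := by
  intro h
  have h1 := congrArg Fin.val h
  rw [AV_val, BV_val] at h1
  have := mod_bound hk a
  omega

lemma BV_ne_AV (hk : 3 ≤ k) (a b : ℕ) : BV hk a ≠ AV hk b := fun h => AV_ne_BV hk b a h.symm

lemma AV_ne_AV (hk : 3 ≤ k) {a b : ℕ} (h : a % k ≠ b % k) : AV hk a ≠ AV hk b := by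
  intro hh; exact h (congrArg Fin.val hh)

lemma BV_ne_BV (hk : 3 ≤ k) {a b : ℕ} (h : a % k ≠ b % k) : BV hk a ≠ BV hk b := by
  intro hh; have := congrArg Fin.val hh; rw [BV_val, BV_val] at this; omega

/-- classify a vertex whose color has value `c` -/
lemma vertex_of_color (hk : 3 ≤ k) {z : Fin (2*k) → Fin k}
    (hz : ∀ u, (z u).val = u.val % k) {v : Fin (2*k)} {c : ℕ} (hc : (z v).val = c) :
    v = AV hk c ∨ v = BV hk c := by
  have h1 := hz v
  have h2 := modc hk v.isLt
  have h3 : c < k := by rw [← hc]; exact (z v).isLt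
  rcases h2 with ⟨h4, h5⟩ | ⟨h4, h5⟩
  · left; apply Fin.ext; rw [AV_val, mod_small hk h3]; omega
  · right; apply Fin.ext; rw [BV_val, mod_small hk h3]; omega

lemma z_AV (hk : 3 ≤ k) {z : Fin (2*k) → Fin k}
    (hz : ∀ u, (z u).val = u.val % k) (i : ℕ) : (z (AV hk i)).val = i % k := by
  rw [hz, AV_val]; exact Nat.mod_mod_of_dvd i dvd_rfl

lemma z_BV (hk : 3 ≤ k) {z : Fin (2*k) → Fin k}
    (hz : ∀ u, (z u).val = u.val % k) (i : ℕ) : (z (BV hk i)).val = i % k := by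
  rw [hz, BV_val, mod_period hk]; exact Nat.mod_mod_of_dvd i dvd_rfl

/-- The color-count formula for distinct colors. -/
lemma color_formula (hk : 3 ≤ k) {z : Fin (2*k) → Fin k}
    (hz : ∀ u, (z u).val = u.val % k) (x : Edge (2*k) → ℕ) (i j : Fin k) (hij : i ≠ j) :
    colorSeqN z x i j = entN x (AV hk i.val) (AV hk j.val) + entN x (AV hk i.val) (BV hk j.val)
      + entN x (BV hk i.val) (AV hk j.val) + entN x (BV hk i.val) (BV hk j.val) := by
  set F : Fin (2*k) → Fin (2*k) → ℕ := fun u v =>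
    if (z u = i ∧ z v = j) ∨ (z u = j ∧ z v = i) then entN x u v else 0 with hF
  have hFsym : ∀ u v, F u v = F v u := by
    intro u v
    simp only [hF]
    rw [entN_symm]
    congr 1
    ext; constructor
    · rintro (⟨h1, h2⟩ | ⟨h1, h2⟩); exacts [Or.inr ⟨h2, h1⟩, Or.inl ⟨h2, h1⟩]
    · rintro (⟨h1, h2⟩ | ⟨h1, h2⟩); exacts [Or.inr ⟨h2, h1⟩, Or.inl ⟨h2, h1⟩]
  have hFdiag : ∀ u, F u u = 0 := by
    intro u
    simp only [hF]
    split <;> simp [entN_diag]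
  have hsum := sum_sym F hFsym hFdiag
  have hcol2 : ∑ e : Edge (2*k), F e.1.1 e.1.2 = colorSeqN z x i j := by
    rw [colorSeqN]
    refine Finset.sum_congr rfl (fun e _ => ?_)
    simp only [hF]
    split
    · exact entN_edge x e.2
    · rfl
  have hzAi : z (AV hk i.val) = i := Fin.ext (by rw [z_AV hk hz, mod_small hk i.isLt])
  have hzBi : z (BV hk i.val) = i := Fin.ext (by rw [z_BV hk hz, mod_small hk i.isLt])
  have hzAj : z (AV hk j.val) = j := Fin.ext (by rw [z_AV hk hz, mod_small hk j.isLt])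
  have hzBj : z (BV hk j.val) = j := Fin.ext (by rw [z_BV hk hz, mod_small hk j.isLt])
  have hvalij : i.val % k ≠ j.val % k := by
    rw [mod_small hk i.isLt, mod_small hk j.isLt]
    exact fun h => hij (Fin.ext h)
  have inner_i : ∀ u : Fin (2*k), z u = i →
      ∑ v, F u v = entN x u (AV hk j.val) + entN x u (BV hk j.val) := by
    intro u hu
    have h1 : ∀ v, F u v = if z v = j then entN x u v else 0 := by
      intro v
      simp only [hF]
      by_cases h : z v = j
      · rw [if_pos h, if_pos (Or.inl ⟨hu, h⟩)]
      · rw [if_neg h, if_neg]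
        rintro (⟨h1, h2⟩ | ⟨h1, h2⟩)
        · exact h h2
        · exact hij ((hu ▸ h1).symm ▸ rfl)
    have h2 : ∀ v : Fin (2*k), v ≠ AV hk j.val → v ≠ BV hk j.val →
        (if z v = j then entN x u v else 0) = 0 := by
      intro v hv1 hv2
      rw [if_neg]
      intro h
      rcases vertex_of_color hk hz (congrArg Fin.val h) with h3 | h3
      · exact hv1 h3
      · exact hv2 h3
    rw [Finset.sum_congr rfl (fun v _ => h1 v),
      sum_support_two _ _ _ (AV_ne_BV hk j.val j.val) h2, if_pos hzAj, if_pos hzBj]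
  have inner_j : ∀ u : Fin (2*k), z u = j →
      ∑ v, F u v = entN x u (AV hk i.val) + entN x u (BV hk i.val) := by
    intro u hu
    have h1 : ∀ v, F u v = if z v = i then entN x u v else 0 := by
      intro v
      simp only [hF]
      by_cases h : z v = i
      · rw [if_pos h, if_pos (Or.inr ⟨hu, h⟩)]
      · rw [if_neg h, if_neg]
        rintro (⟨h1, h2⟩ | ⟨h1, h2⟩)
        · exact hij ((hu ▸ h1) ▸ rfl)
        · exact h h2
    have h2 : ∀ v : Fin (2*k), v ≠ AV hk i.val → v ≠ BV hk i.val →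
        (if z v = i then entN x u v else 0) = 0 := by
      intro v hv1 hv2
      rw [if_neg]
      intro h
      rcases vertex_of_color hk hz (congrArg Fin.val h) with h3 | h3
      · exact hv1 h3
      · exact hv2 h3
    rw [Finset.sum_congr rfl (fun v _ => h1 v),
      sum_support_two _ _ _ (AV_ne_BV hk i.val i.val) h2, if_pos hzAi, if_pos hzBi]
  have houter : ∑ u : Fin (2*k), ∑ v, F u v =
      (∑ v, F (AV hk i.val) v) + (∑ v, F (BV hk i.val) v)
        + (∑ v, F (AV hk j.val) v) + (∑ v, F (BV hk j.val) v) := by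
    have h0 : ∀ u : Fin (2*k), u ≠ AV hk i.val → u ≠ BV hk i.val → u ≠ AV hk j.val →
        u ≠ BV hk j.val → ∑ v, F u v = 0 := by
      intro u h1 h2 h3 h4
      apply Finset.sum_eq_zero
      intro v _
      simp only [hF]
      rw [if_neg]
      rintro (⟨h5, _⟩ | ⟨h5, _⟩)
      · rcases vertex_of_color hk hz (congrArg Fin.val h5) with h6 | h6
        · exact h1 h6
        · exact h2 h6
      · rcases vertex_of_color hk hz (congrArg Fin.val h5) with h6 | h6
        · exact h3 h6
        · exact h4 h6
    rw [sum_support_four _ _ _ _ _ (AV_ne_BV hk _ _) (AV_ne_AV hk hvalij) (AV_ne_BV hk _ _)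
      (BV_ne_AV hk _ _) (BV_ne_BV hk hvalij) (AV_ne_BV hk _ _) h0]
  rw [houter, inner_i _ hzAi, inner_i _ hzBi, inner_j _ hzAj, inner_j _ hzBj, hcol2] at hsum
  rw [entN_symm x (AV hk j.val) (AV hk i.val), entN_symm x (AV hk j.val) (BV hk i.val),
    entN_symm x (BV hk j.val) (AV hk i.val), entN_symm x (BV hk j.val) (BV hk i.val)] at hsum
  omega

/-- The diagonal color-count formula. -/
lemma color_diag (hk : 3 ≤ k) {z : Fin (2*k) → Fin k}
    (hz : ∀ u, (z u).val = u.val % k) (x : Edge (2*k) → ℕ) (i : Fin k) :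
    colorSeqN z x i i = entN x (AV hk i.val) (BV hk i.val) := by
  have hlt : AV hk i.val < BV hk i.val := by
    rw [Fin.lt_def, AV_val, BV_val]; omega
  have hzAi : z (AV hk i.val) = i := Fin.ext (by rw [z_AV hk hz, mod_small hk i.isLt])
  have hzBi : z (BV hk i.val) = i := Fin.ext (by rw [z_BV hk hz, mod_small hk i.isLt])
  rw [colorSeqN, entN_edge x hlt]
  rw [Finset.sum_eq_single (⟨(AV hk i.val, BV hk i.val), hlt⟩ : Edge (2*k))]
  · rw [if_pos (Or.inl ⟨hzAi, hzBi⟩)]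
  · intro e _ hne
    rw [if_neg]
    rintro (⟨h1, h2⟩ | ⟨h1, h2⟩) <;>
    · apply hne
      have hc1 := vertex_of_color hk hz (congrArg Fin.val h1)
      have hc2 := vertex_of_color hk hz (congrArg Fin.val h2)
      have helt := e.2
      have hAB : (AV hk i.val).val < (BV hk i.val).val := hlt
      rcases hc1 with h3 | h3 <;> rcases hc2 with h4 | h4 <;>
        rw [Fin.lt_def, h3, h4] at helt
      · exact absurd helt (lt_irrefl _)
      · exact Subtype.ext (Prod.ext h3 h4)
      · exact absurd helt (by omega)
      · exact absurd helt (lt_irrefl _)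
  · intro h
    exact absurd (Finset.mem_univ _) h

/-- Degree formula: if all entries away from colors `i, i+2 (mod k)` vanish. -/
lemma deg_formula (hk : 3 ≤ k) (x : Edge (2*k) → ℕ) (u : Fin (2*k)) (i : ℕ)
    (h0 : ∀ v : Fin (2*k), v.val % k ≠ i % k → v.val % k ≠ (i+2) % k → entN x u v = 0) :
    degSeqN x u = entN x u (AV hk i) + entN x u (BV hk i)
      + entN x u (AV hk (i+2)) + entN x u (BV hk (i+2)) := by
  rw [degSeqN]
  have hne : i % k ≠ (i+2) % k := (two_mod_ne hk i).symm
  apply sum_support_four _ _ _ _ _ (AV_ne_BV hk _ _) (AV_ne_AV hk hne) (AV_ne_BV hk _ _)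
    (BV_ne_AV hk _ _) (BV_ne_BV hk hne) (AV_ne_BV hk _ _)
  intro v h1 h2 h3 h4
  apply h0
  · intro h
    rcases modc hk v.isLt with ⟨h5, h6⟩ | ⟨h5, h6⟩
    · exact h1 (Fin.ext (by rw [AV_val, ← h]; omega))
    · exact h2 (Fin.ext (by rw [BV_val, ← h]; omega))
  · intro h
    rcases modc hk v.isLt with ⟨h5, h6⟩ | ⟨h5, h6⟩
    · exact h3 (Fin.ext (by rw [AV_val, ← h]; omega))
    · exact h4 (Fin.ext (by rw [BV_val, ← h]; omega))
end Work2
section Gammas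
variable {k : ℕ}

/-- Adjacency matrix of the first fiber element: the `a`-cycle plus edges `a_i b_{i+1}`. -/
def Y1 (k u v : ℕ) : ℕ :=
  if (u < k ∧ v < k ∧ (v = u+1 ∨ u = v+1 ∨ (u = 0 ∧ v+1 = k) ∨ (v = 0 ∧ u+1 = k)))
    ∨ (u < k ∧ k ≤ v ∧ v < 2*k ∧ (v = u+k+1 ∨ (u+1 = k ∧ v = k)))
    ∨ (v < k ∧ k ≤ u ∧ u < 2*k ∧ (u = v+k+1 ∨ (v+1 = k ∧ u = k))) then 1 else 0

/-- Adjacency matrix of the second fiber element: the `a`-cycle plus edges `b_i a_{i+1}`. -/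
def Y2 (k u v : ℕ) : ℕ :=
  if (u < k ∧ v < k ∧ (v = u+1 ∨ u = v+1 ∨ (u = 0 ∧ v+1 = k) ∨ (v = 0 ∧ u+1 = k)))
    ∨ (u < k ∧ k ≤ v ∧ v < 2*k ∧ (v+1 = u+k ∨ (u = 0 ∧ v+1 = 2*k)))
    ∨ (v < k ∧ k ≤ u ∧ u < 2*k ∧ (u+1 = v+k ∨ (v = 0 ∧ u+1 = 2*k))) then 1 else 0

lemma Y1_symm (u v : ℕ) : Y1 k u v = Y1 k v u := by
  unfold Y1
  refine if_congr ?_ rfl rfl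
  omega

lemma Y2_symm (u v : ℕ) : Y2 k u v = Y2 k v u := by
  unfold Y2
  refine if_congr ?_ rfl rfl
  omega

lemma Y1_diag (hk : 3 ≤ k) (u : ℕ) : Y1 k u u = 0 := by
  unfold Y1
  rw [if_neg]
  omega

lemma Y2_diag (hk : 3 ≤ k) (u : ℕ) : Y2 k u u = 0 := by
  unfold Y2
  rw [if_neg]
  omega

/-- The two elements of the simple fiber. -/
def gam1 (k : ℕ) : Edge (2*k) → ℕ := fun e => Y1 k e.1.1.val e.1.2.val
def gam2 (k : ℕ) : Edge (2*k) → ℕ := fun e => Y2 k e.1.1.val e.1.2.val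

lemma entN_gam1 (hk : 3 ≤ k) (u v : Fin (2*k)) : entN (gam1 k) u v = Y1 k u.val v.val := by
  unfold entN
  rcases lt_trichotomy u v with h | h | h
  · rw [dif_pos h]; rfl
  · subst h; rw [dif_neg (lt_irrefl _), dif_neg (lt_irrefl _), Y1_diag hk]
  · rw [dif_neg (asymm h), dif_pos h]
    exact Y1_symm v.val u.val

lemma entN_gam2 (hk : 3 ≤ k) (u v : Fin (2*k)) : entN (gam2 k) u v = Y2 k u.val v.val := by
  unfold entN
  rcases lt_trichotomy u v with h | h | h
  · rw [dif_pos h]; rfl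
  · subst h; rw [dif_neg (lt_irrefl _), dif_neg (lt_irrefl _), Y2_diag hk]
  · rw [dif_neg (asymm h), dif_pos h]
    exact Y2_symm v.val u.val
end Gammas
section Regime
variable {k : ℕ}

lemma Y1_aa {u v : ℕ} (hu : u < k) (hv : v < k) :
    Y1 k u v = if (v = u+1 ∨ u = v+1 ∨ (u = 0 ∧ v+1 = k) ∨ (v = 0 ∧ u+1 = k)) then 1 else 0 := by
  unfold Y1; split_ifs <;> omega

lemma Y1_ab {u v : ℕ} (hu : u < k) (hv1 : k ≤ v) (hv2 : v < 2*k) :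
    Y1 k u v = if (v = u+k+1 ∨ (u+1 = k ∧ v = k)) then 1 else 0 := by
  unfold Y1; split_ifs <;> omega

lemma Y1_ba {u v : ℕ} (hu1 : k ≤ u) (hu2 : u < 2*k) (hv : v < k) :
    Y1 k u v = if (u = v+k+1 ∨ (v+1 = k ∧ u = k)) then 1 else 0 := by
  unfold Y1; split_ifs <;> omega

lemma Y1_bb {u v : ℕ} (hu : k ≤ u) (hv : k ≤ v) : Y1 k u v = 0 := by
  unfold Y1; rw [if_neg]; omega

lemma Y2_aa {u v : ℕ} (hu : u < k) (hv : v < k) :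
    Y2 k u v = if (v = u+1 ∨ u = v+1 ∨ (u = 0 ∧ v+1 = k) ∨ (v = 0 ∧ u+1 = k)) then 1 else 0 := by
  unfold Y2; split_ifs <;> omega

lemma Y2_ab {u v : ℕ} (hu : u < k) (hv1 : k ≤ v) (hv2 : v < 2*k) :
    Y2 k u v = if (v+1 = u+k ∨ (u = 0 ∧ v+1 = 2*k)) then 1 else 0 := by
  unfold Y2; split_ifs <;> omega

lemma Y2_ba {u v : ℕ} (hu1 : k ≤ u) (hu2 : u < 2*k) (hv : v < k) :
    Y2 k u v = if (u+1 = v+k ∨ (v = 0 ∧ u+1 = 2*k)) then 1 else 0 := by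
  unfold Y2; split_ifs <;> omega

lemma Y2_bb {u v : ℕ} (hu : k ≤ u) (hv : k ≤ v) : Y2 k u v = 0 := by
  unfold Y2; rw [if_neg]; omega
end Regime

section Helpers

lemma Y1_zero_helper (k w v m n a b : ℕ) (hk : 3 ≤ k)
    (hu : (m = w ∧ w < k) ∨ (m = w - k ∧ k ≤ w)) (hw : w < 2*k) (hmb : m < k)
    (hv : (n = v ∧ v < k) ∨ (n = v - k ∧ k ≤ v)) (hw2 : v < 2*k) (hnb : n < k)
    (hsA : (a = m + k - 1 ∧ m + k - 1 < k) ∨ (a = m - 1 ∧ k ≤ m + k - 1))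
    (hsB : (b = m + 1 ∧ m + 1 < k) ∨ (b = 0 ∧ m + 1 = k))
    (h1 : n ≠ a) (h2 : n ≠ b) : Y1 k w v = 0 := by
  rcases hu with ⟨hu1, hu2⟩ | ⟨hu1, hu2⟩ <;> rcases hv with ⟨hv1, hv2⟩ | ⟨hv1, hv2⟩
  · rw [Y1_aa hu2 hv2, if_neg]; omega
  · rw [Y1_ab hu2 (by omega) (by omega), if_neg]; omega
  · rw [Y1_ba (by omega) (by omega) hv2, if_neg]; omega
  · rw [Y1_bb (by omega) (by omega)]

lemma Y2_zero_helper (k w v m n a b : ℕ) (hk : 3 ≤ k)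
    (hu : (m = w ∧ w < k) ∨ (m = w - k ∧ k ≤ w)) (hw : w < 2*k) (hmb : m < k)
    (hv : (n = v ∧ v < k) ∨ (n = v - k ∧ k ≤ v)) (hw2 : v < 2*k) (hnb : n < k)
    (hsA : (a = m + k - 1 ∧ m + k - 1 < k) ∨ (a = m - 1 ∧ k ≤ m + k - 1))
    (hsB : (b = m + 1 ∧ m + 1 < k) ∨ (b = 0 ∧ m + 1 = k))
    (h1 : n ≠ a) (h2 : n ≠ b) : Y2 k w v = 0 := by
  rcases hu with ⟨hu1, hu2⟩ | ⟨hu1, hu2⟩ <;> rcases hv with ⟨hv1, hv2⟩ | ⟨hv1, hv2⟩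
  · rw [Y2_aa hu2 hv2, if_neg]; omega
  · rw [Y2_ab hu2 (by omega) (by omega), if_neg]; omega
  · rw [Y2_ba (by omega) (by omega) hv2, if_neg]; omega
  · rw [Y2_bb (by omega) (by omega)]

lemma deg1_helper (k w m a b : ℕ) (hk : 3 ≤ k) (hw : w < 2*k) (hmb : m < k)
    (hu : (m = w ∧ w < k) ∨ (m = w - k ∧ k ≤ w))
    (hsA : (a = m + k - 1 ∧ m + k - 1 < k) ∨ (a = m - 1 ∧ k ≤ m + k - 1))
    (hsB : (b = m + 1 ∧ m + 1 < k) ∨ (b = 0 ∧ m + 1 = k)) :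
    (↑(Y1 k w a + Y1 k w (a + k) + Y1 k w b + Y1 k w (b + k)) : ℤ)
      = if w < k then 3 else 1 := by
  have hak : a < k := by omega
  have hbk : b < k := by omega
  rcases hsA with ⟨h3, h4⟩ | ⟨h3, h4⟩ <;> rcases hsB with ⟨h5, h6⟩ | ⟨h5, h6⟩ <;>
    subst h3 <;> subst h5 <;> rcases hu with ⟨h1, h2⟩ | ⟨h1, h2⟩ <;> subst h1 <;>
    first
    | (rw [Y1_aa h2 hak, Y1_ab h2 (by omega) (by omega), Y1_aa h2 hbk,
        Y1_ab h2 (by omega) (by omega)]; split_ifs <;> omega)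
    | (rw [Y1_ba (by omega) (by omega) hak, Y1_bb (by omega) (by omega),
        Y1_ba (by omega) (by omega) hbk, Y1_bb (by omega) (by omega)]; split_ifs <;> omega)

lemma deg2_helper (k w m a b : ℕ) (hk : 3 ≤ k) (hw : w < 2*k) (hmb : m < k)
    (hu : (m = w ∧ w < k) ∨ (m = w - k ∧ k ≤ w))
    (hsA : (a = m + k - 1 ∧ m + k - 1 < k) ∨ (a = m - 1 ∧ k ≤ m + k - 1))
    (hsB : (b = m + 1 ∧ m + 1 < k) ∨ (b = 0 ∧ m + 1 = k)) :
    (↑(Y2 k w a + Y2 k w (a + k) + Y2 k w b + Y2 k w (b + k)) : ℤ)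
      = if w < k then 3 else 1 := by
  have hak : a < k := by omega
  have hbk : b < k := by omega
  rcases hsA with ⟨h3, h4⟩ | ⟨h3, h4⟩ <;> rcases hsB with ⟨h5, h6⟩ | ⟨h5, h6⟩ <;>
    subst h3 <;> subst h5 <;> rcases hu with ⟨h1, h2⟩ | ⟨h1, h2⟩ <;> subst h1 <;>
    first
    | (rw [Y2_aa h2 hak, Y2_ab h2 (by omega) (by omega), Y2_aa h2 hbk,
        Y2_ab h2 (by omega) (by omega)]; split_ifs <;> omega)
    | (rw [Y2_ba (by omega) (by omega) hak, Y2_bb (by omega) (by omega),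
        Y2_ba (by omega) (by omega) hbk, Y2_bb (by omega) (by omega)]; split_ifs <;> omega)

lemma color1_helper (k i j p q : ℕ) (hk : 3 ≤ k) (hik : i < k) (hjk : j < k) (hij : i ≠ j)
    (hp : (p = i + 1 ∧ i + 1 < k) ∨ (p = 0 ∧ i + 1 = k))
    (hq : (q = j + 1 ∧ j + 1 < k) ∨ (q = 0 ∧ j + 1 = k)) :
    (↑(Y1 k i j + Y1 k i (j+k) + Y1 k (i+k) j + Y1 k (i+k) (j+k)) : ℤ)
      = if (p = j ∨ q = i) then 2 else 0 := by
  rcases hp with ⟨h1, h2⟩ | ⟨h1, h2⟩ <;> rcases hq with ⟨h3, h4⟩ | ⟨h3, h4⟩ <;>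
    subst h1 <;> subst h3 <;>
    rw [Y1_aa hik hjk, Y1_ab hik (by omega) (by omega), Y1_ba (by omega) (by omega) hjk,
      Y1_bb (by omega) (by omega)] <;> split_ifs <;> omega

lemma color2_helper (k i j p q : ℕ) (hk : 3 ≤ k) (hik : i < k) (hjk : j < k) (hij : i ≠ j)
    (hp : (p = i + 1 ∧ i + 1 < k) ∨ (p = 0 ∧ i + 1 = k))
    (hq : (q = j + 1 ∧ j + 1 < k) ∨ (q = 0 ∧ j + 1 = k)) :
    (↑(Y2 k i j + Y2 k i (j+k) + Y2 k (i+k) j + Y2 k (i+k) (j+k)) : ℤ)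
      = if (p = j ∨ q = i) then 2 else 0 := by
  rcases hp with ⟨h1, h2⟩ | ⟨h1, h2⟩ <;> rcases hq with ⟨h3, h4⟩ | ⟨h3, h4⟩ <;>
    subst h1 <;> subst h3 <;>
    rw [Y2_aa hik hjk, Y2_ab hik (by omega) (by omega), Y2_ba (by omega) (by omega) hjk,
      Y2_bb (by omega) (by omega)] <;> split_ifs <;> omega

lemma diag1_helper (k i p : ℕ) (hk : 3 ≤ k) (hik : i < k)
    (hp : (p = i + 1 ∧ i + 1 < k) ∨ (p = 0 ∧ i + 1 = k)) :
    (↑(Y1 k i (i+k)) : ℤ) = if (p = i ∨ p = i) then 2 else 0 := by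
  rw [Y1_ab hik (by omega) (by omega)]
  split_ifs <;> omega

lemma diag2_helper (k i p : ℕ) (hk : 3 ≤ k) (hik : i < k)
    (hp : (p = i + 1 ∧ i + 1 < k) ∨ (p = 0 ∧ i + 1 = k)) :
    (↑(Y2 k i (i+k)) : ℤ) = if (p = i ∨ p = i) then 2 else 0 := by
  rw [Y2_ab hik (by omega) (by omega)]
  split_ifs <;> omega
end Helpers
section Membership
variable {k : ℕ}

lemma gam1_le_one (k : ℕ) : ∀ e, gam1 k e ≤ 1 := by
  intro e; unfold gam1 Y1; split <;> omega

lemma gam2_le_one (k : ℕ) : ∀ e, gam2 k e ≤ 1 := by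
  intro e; unfold gam2 Y2; split <;> omega

lemma hsA_fact (hk : 3 ≤ k) (m : ℕ) (hmb : m < k) :
    ((m + k - 1) % k = m + k - 1 ∧ m + k - 1 < k)
      ∨ ((m + k - 1) % k = m - 1 ∧ k ≤ m + k - 1) := by
  have := modc hk (t := m + k - 1) (by omega)
  omega

lemma hsB_fact (hk : 3 ≤ k) (m : ℕ) (hmb : m < k) :
    ((m + 1) % k = m + 1 ∧ m + 1 < k) ∨ ((m + 1) % k = 0 ∧ m + 1 = k) := by
  have h1 := mod_succ_cases hk m
  have h2 : m % k = m := mod_small hk hmb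
  omega

lemma gam1_deg (hk : 3 ≤ k) (u : Fin (2*k)) :
    (degSeqN (gam1 k) u : ℤ) = if u.val < k then 3 else 1 := by
  have hmb : u.val % k < k := mod_bound hk u.val
  have hu := modc hk u.isLt
  have hsA := hsA_fact hk (u.val % k) hmb
  have hsB := hsB_fact hk (u.val % k) hmb
  have hrw : (u.val % k + k - 1 + 2) % k = (u.val % k + 1) % k := by
    rw [show u.val % k + k - 1 + 2 = (u.val % k + 1) + k by omega]
    exact mod_period hk _
  have h0 : ∀ v : Fin (2*k), v.val % k ≠ (u.val % k + k - 1) % k →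
      v.val % k ≠ (u.val % k + k - 1 + 2) % k → entN (gam1 k) u v = 0 := by
    intro v h1 h2
    rw [hrw] at h2
    rw [entN_gam1 hk]
    exact Y1_zero_helper k u.val v.val (u.val % k) (v.val % k) _ _ hk hu u.isLt hmb
      (modc hk v.isLt) v.isLt (mod_bound hk v.val) hsA hsB h1 h2
  rw [deg_formula hk (gam1 k) u (u.val % k + k - 1) h0,
    entN_gam1 hk, entN_gam1 hk, entN_gam1 hk, entN_gam1 hk, AV_val, BV_val, AV_val, BV_val, hrw]
  exact deg1_helper k u.val (u.val % k) _ _ hk u.isLt hmb hu hsA hsB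

lemma gam2_deg (hk : 3 ≤ k) (u : Fin (2*k)) :
    (degSeqN (gam2 k) u : ℤ) = if u.val < k then 3 else 1 := by
  have hmb : u.val % k < k := mod_bound hk u.val
  have hu := modc hk u.isLt
  have hsA := hsA_fact hk (u.val % k) hmb
  have hsB := hsB_fact hk (u.val % k) hmb
  have hrw : (u.val % k + k - 1 + 2) % k = (u.val % k + 1) % k := by
    rw [show u.val % k + k - 1 + 2 = (u.val % k + 1) + k by omega]
    exact mod_period hk _
  have h0 : ∀ v : Fin (2*k), v.val % k ≠ (u.val % k + k - 1) % k →
      v.val % k ≠ (u.val % k + k - 1 + 2) % k → entN (gam2 k) u v = 0 := by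
    intro v h1 h2
    rw [hrw] at h2
    rw [entN_gam2 hk]
    exact Y2_zero_helper k u.val v.val (u.val % k) (v.val % k) _ _ hk hu u.isLt hmb
      (modc hk v.isLt) v.isLt (mod_bound hk v.val) hsA hsB h1 h2
  rw [deg_formula hk (gam2 k) u (u.val % k + k - 1) h0,
    entN_gam2 hk, entN_gam2 hk, entN_gam2 hk, entN_gam2 hk, AV_val, BV_val, AV_val, BV_val, hrw]
  exact deg2_helper k u.val (u.val % k) _ _ hk u.isLt hmb hu hsA hsB

lemma gam1_color (hk : 3 ≤ k) {z : Fin (2*k) → Fin k} (hz : ∀ u, (z u).val = u.val % k)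
    (i j : Fin k) :
    (colorSeqN z (gam1 k) i j : ℤ) =
      if (i.val + 1) % k = j.val ∨ (j.val + 1) % k = i.val then 2 else 0 := by
  have hsi := hsB_fact hk i.val i.isLt
  have hsj := hsB_fact hk j.val j.isLt
  by_cases hij : i = j
  · subst hij
    rw [color_diag hk hz, entN_gam1 hk, AV_val, BV_val, mod_small hk i.isLt]
    exact diag1_helper k i.val _ hk i.isLt hsi
  · rw [color_formula hk hz _ i j hij, entN_gam1 hk, entN_gam1 hk, entN_gam1 hk, entN_gam1 hk,
      AV_val, BV_val, AV_val, BV_val, mod_small hk i.isLt, mod_small hk j.isLt]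
    exact color1_helper k i.val j.val _ _ hk i.isLt j.isLt (fun h => hij (Fin.ext h)) hsi hsj

lemma gam2_color (hk : 3 ≤ k) {z : Fin (2*k) → Fin k} (hz : ∀ u, (z u).val = u.val % k)
    (i j : Fin k) :
    (colorSeqN z (gam2 k) i j : ℤ) =
      if (i.val + 1) % k = j.val ∨ (j.val + 1) % k = i.val then 2 else 0 := by
  have hsi := hsB_fact hk i.val i.isLt
  have hsj := hsB_fact hk j.val j.isLt
  by_cases hij : i = j
  · subst hij
    rw [color_diag hk hz, entN_gam2 hk, AV_val, BV_val, mod_small hk i.isLt]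
    exact diag2_helper k i.val _ hk i.isLt hsi
  · rw [color_formula hk hz _ i j hij, entN_gam2 hk, entN_gam2 hk, entN_gam2 hk, entN_gam2 hk,
      AV_val, BV_val, AV_val, BV_val, mod_small hk i.isLt, mod_small hk j.isLt]
    exact color2_helper k i.val j.val _ _ hk i.isLt j.isLt (fun h => hij (Fin.ext h)) hsi hsj
end Membership
section EdgeEval
variable {k : ℕ}

lemma edge_eval1 (hk : 3 ≤ k) (x : Edge (2*k) → ℕ)
    (czero : ∀ u v : Fin (2*k), (u.val % k + 1) % k ≠ v.val % k →
      (v.val % k + 1) % k ≠ u.val % k → entN x u v = 0)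
    (hE1 : ∀ i, entN x (AV hk i) (AV hk (i+1)) = 1)
    (hE2 : ∀ i, entN x (AV hk i) (BV hk (i+1)) = 1)
    (hE3 : ∀ i, entN x (BV hk i) (AV hk (i+1)) = 0)
    (hE4 : ∀ i, entN x (BV hk i) (BV hk (i+1)) = 0)
    (u v : Fin (2*k)) (huv : u < v) : entN x u v = Y1 k u.val v.val := by
  rcases u with ⟨a, ha⟩
  rcases v with ⟨b, hb⟩
  have hab : a < b := huv
  show entN x ⟨a, ha⟩ ⟨b, hb⟩ = Y1 k a b
  rcases lt_or_ge b k with hbk | hbk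
  · have hak : a < k := lt_trans hab hbk
    have hma : a % k = a := mod_small hk hak
    have hmb : b % k = b := mod_small hk hbk
    have hsa := hsB_fact hk a hak
    have hsb := hsB_fact hk b hbk
    rw [Y1_aa hak hbk]
    by_cases h1 : b = a+1
    · have hu : (⟨a, ha⟩ : Fin (2*k)) = AV hk a := Fin.ext (show a = a % k by omega)
      have hv : (⟨b, hb⟩ : Fin (2*k)) = AV hk (a+1) := Fin.ext (show b = (a+1) % k by omega)
      rw [hu, hv, hE1 a, if_pos (by omega)]
    · by_cases h2 : a = 0 ∧ b+1 = k
      · have hu : (⟨a, ha⟩ : Fin (2*k)) = AV hk k := Fin.ext (show a = k % k by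
          rw [Nat.mod_self]; omega)
        have hv : (⟨b, hb⟩ : Fin (2*k)) = AV hk (k-1) := Fin.ext (show b = (k-1) % k by
          rw [mod_small hk (by omega)]; omega)
        rw [hu, hv, entN_symm]
        have h3 := hE1 (k-1)
        rw [show k-1+1 = k by omega] at h3
        rw [h3, if_pos (by omega)]
      · rw [czero ⟨a, ha⟩ ⟨b, hb⟩ (show (a % k + 1) % k ≠ b % k by rw [hma, hmb]; omega)
          (show (b % k + 1) % k ≠ a % k by rw [hma, hmb]; omega), if_neg (by omega)]
  · rcases lt_or_ge a k with hak | hak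
    · rw [Y1_ab hak (by omega) (by omega)]
      have hsa := hsB_fact hk a hak
      have hsbk := hsB_fact hk (b-k) (by omega)
      have hmb : b % k = b - k := by have := modc hk hb; omega
      have hma : a % k = a := mod_small hk hak
      by_cases h1 : b = a + k + 1 ∨ (a + 1 = k ∧ b = k)
      · have hu : (⟨a, ha⟩ : Fin (2*k)) = AV hk a := Fin.ext (show a = a % k by omega)
        have hv : (⟨b, hb⟩ : Fin (2*k)) = BV hk (a+1) :=
          Fin.ext (show b = (a+1) % k + k by omega)
        rw [hu, hv, hE2 a, if_pos (by omega)]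
      · by_cases h2 : b + 1 = a + k ∨ (a = 0 ∧ b + 1 = 2*k)
        · have hu : (⟨b, hb⟩ : Fin (2*k)) = BV hk (b-k) :=
            Fin.ext (show b = (b-k) % k + k by rw [mod_small hk (by omega)]; omega)
          have hv : (⟨a, ha⟩ : Fin (2*k)) = AV hk (b-k+1) :=
            Fin.ext (show a = (b-k+1) % k by omega)
          rw [entN_symm, hu, hv, hE3 (b-k), if_neg (by omega)]
        · rw [czero ⟨a, ha⟩ ⟨b, hb⟩ (show (a % k + 1) % k ≠ b % k by rw [hma, hmb]; omega)
            (show (b % k + 1) % k ≠ a % k by rw [hma, hmb]; omega), if_neg (by omega)]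
    · rw [Y1_bb hak hbk]
      have hma : a % k = a - k := by have := modc hk ha; omega
      have hmb : b % k = b - k := by have := modc hk hb; omega
      have hsa := hsB_fact hk (a-k) (by omega)
      have hsb := hsB_fact hk (b-k) (by omega)
      by_cases h1 : b = a + 1
      · have hu : (⟨a, ha⟩ : Fin (2*k)) = BV hk (a-k) :=
          Fin.ext (show a = (a-k) % k + k by rw [mod_small hk (by omega)]; omega)
        have hv : (⟨b, hb⟩ : Fin (2*k)) = BV hk (a-k+1) :=
          Fin.ext (show b = (a-k+1) % k + k by omega)
        rw [hu, hv, hE4 (a-k)]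
      · by_cases h2 : a = k ∧ b = 2*k - 1
        · have hu : (⟨a, ha⟩ : Fin (2*k)) = BV hk k := Fin.ext (show a = k % k + k by
            rw [Nat.mod_self]; omega)
          have hv : (⟨b, hb⟩ : Fin (2*k)) = BV hk (k-1) := Fin.ext (show b = (k-1) % k + k by
            rw [mod_small hk (by omega)]; omega)
          rw [entN_symm, hu, hv]
          have h3 := hE4 (k-1)
          rw [show k-1+1 = k by omega] at h3
          exact h3
        · exact czero ⟨a, ha⟩ ⟨b, hb⟩ (show (a % k + 1) % k ≠ b % k by rw [hma, hmb]; omega)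
            (show (b % k + 1) % k ≠ a % k by rw [hma, hmb]; omega)

lemma edge_eval2 (hk : 3 ≤ k) (x : Edge (2*k) → ℕ)
    (czero : ∀ u v : Fin (2*k), (u.val % k + 1) % k ≠ v.val % k →
      (v.val % k + 1) % k ≠ u.val % k → entN x u v = 0)
    (hE1 : ∀ i, entN x (AV hk i) (AV hk (i+1)) = 1)
    (hE2 : ∀ i, entN x (AV hk i) (BV hk (i+1)) = 0)
    (hE3 : ∀ i, entN x (BV hk i) (AV hk (i+1)) = 1)
    (hE4 : ∀ i, entN x (BV hk i) (BV hk (i+1)) = 0)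
    (u v : Fin (2*k)) (huv : u < v) : entN x u v = Y2 k u.val v.val := by
  rcases u with ⟨a, ha⟩
  rcases v with ⟨b, hb⟩
  have hab : a < b := huv
  show entN x ⟨a, ha⟩ ⟨b, hb⟩ = Y2 k a b
  rcases lt_or_ge b k with hbk | hbk
  · have hak : a < k := lt_trans hab hbk
    have hma : a % k = a := mod_small hk hak
    have hmb : b % k = b := mod_small hk hbk
    have hsa := hsB_fact hk a hak
    have hsb := hsB_fact hk b hbk
    rw [Y2_aa hak hbk]
    by_cases h1 : b = a+1
    · have hu : (⟨a, ha⟩ : Fin (2*k)) = AV hk a := Fin.ext (show a = a % k by omega)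
      have hv : (⟨b, hb⟩ : Fin (2*k)) = AV hk (a+1) := Fin.ext (show b = (a+1) % k by omega)
      rw [hu, hv, hE1 a, if_pos (by omega)]
    · by_cases h2 : a = 0 ∧ b+1 = k
      · have hu : (⟨a, ha⟩ : Fin (2*k)) = AV hk k := Fin.ext (show a = k % k by
          rw [Nat.mod_self]; omega)
        have hv : (⟨b, hb⟩ : Fin (2*k)) = AV hk (k-1) := Fin.ext (show b = (k-1) % k by
          rw [mod_small hk (by omega)]; omega)
        rw [hu, hv, entN_symm]
        have h3 := hE1 (k-1)
        rw [show k-1+1 = k by omega] at h3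
        rw [h3, if_pos (by omega)]
      · rw [czero ⟨a, ha⟩ ⟨b, hb⟩ (show (a % k + 1) % k ≠ b % k by rw [hma, hmb]; omega)
          (show (b % k + 1) % k ≠ a % k by rw [hma, hmb]; omega), if_neg (by omega)]
  · rcases lt_or_ge a k with hak | hak
    · rw [Y2_ab hak (by omega) (by omega)]
      have hsa := hsB_fact hk a hak
      have hsbk := hsB_fact hk (b-k) (by omega)
      have hmb : b % k = b - k := by have := modc hk hb; omega
      have hma : a % k = a := mod_small hk hak
      by_cases h1 : b = a + k + 1 ∨ (a + 1 = k ∧ b = k)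
      · have hu : (⟨a, ha⟩ : Fin (2*k)) = AV hk a := Fin.ext (show a = a % k by omega)
        have hv : (⟨b, hb⟩ : Fin (2*k)) = BV hk (a+1) :=
          Fin.ext (show b = (a+1) % k + k by omega)
        rw [hu, hv, hE2 a, if_neg (by omega)]
      · by_cases h2 : b + 1 = a + k ∨ (a = 0 ∧ b + 1 = 2*k)
        · have hu : (⟨b, hb⟩ : Fin (2*k)) = BV hk (b-k) :=
            Fin.ext (show b = (b-k) % k + k by rw [mod_small hk (by omega)]; omega)
          have hv : (⟨a, ha⟩ : Fin (2*k)) = AV hk (b-k+1) :=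
            Fin.ext (show a = (b-k+1) % k by omega)
          rw [entN_symm, hu, hv, hE3 (b-k), if_pos (by omega)]
        · rw [czero ⟨a, ha⟩ ⟨b, hb⟩ (show (a % k + 1) % k ≠ b % k by rw [hma, hmb]; omega)
            (show (b % k + 1) % k ≠ a % k by rw [hma, hmb]; omega), if_neg (by omega)]
    · rw [Y2_bb hak hbk]
      have hma : a % k = a - k := by have := modc hk ha; omega
      have hmb : b % k = b - k := by have := modc hk hb; omega
      have hsa := hsB_fact hk (a-k) (by omega)
      have hsb := hsB_fact hk (b-k) (by omega)
      by_cases h1 : b = a + 1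
      · have hu : (⟨a, ha⟩ : Fin (2*k)) = BV hk (a-k) :=
          Fin.ext (show a = (a-k) % k + k by rw [mod_small hk (by omega)]; omega)
        have hv : (⟨b, hb⟩ : Fin (2*k)) = BV hk (a-k+1) :=
          Fin.ext (show b = (a-k+1) % k + k by omega)
        rw [hu, hv, hE4 (a-k)]
      · by_cases h2 : a = k ∧ b = 2*k - 1
        · have hu : (⟨a, ha⟩ : Fin (2*k)) = BV hk k := Fin.ext (show a = k % k + k by
            rw [Nat.mod_self]; omega)
          have hv : (⟨b, hb⟩ : Fin (2*k)) = BV hk (k-1) := Fin.ext (show b = (k-1) % k + k by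
            rw [mod_small hk (by omega)]; omega)
          rw [entN_symm, hu, hv]
          have h3 := hE4 (k-1)
          rw [show k-1+1 = k by omega] at h3
          exact h3
        · exact czero ⟨a, ha⟩ ⟨b, hb⟩ (show (a % k + 1) % k ≠ b % k by rw [hma, hmb]; omega)
            (show (b % k + 1) % k ≠ a % k by rw [hma, hmb]; omega)
end EdgeEval
section Unique
variable {k : ℕ}

lemma fiber_unique (hk : 3 ≤ k) {z : Fin (2*k) → Fin k} (hz : ∀ u, (z u).val = u.val % k)
    (x : Edge (2*k) → ℕ)
    (hd : ∀ u, (degSeqN x u : ℤ) = if u.val < k then 3 else 1)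
    (hc : ∀ i j, (colorSeqN z x i j : ℤ) =
      if (i.val + 1) % k = j.val ∨ (j.val + 1) % k = i.val then 2 else 0)
    (hb : ∀ e, x e ≤ 1) : x = gam1 k ∨ x = gam2 k := by
  have hble : ∀ u v : Fin (2*k), entN x u v ≤ 1 := entN_le_one x hb
  have czero : ∀ u v : Fin (2*k), (u.val % k + 1) % k ≠ v.val % k →
      (v.val % k + 1) % k ≠ u.val % k → entN x u v = 0 := by
    intro u v h1 h2
    have hcc := hc ⟨u.val % k, mod_bound hk u.val⟩ ⟨v.val % k, mod_bound hk v.val⟩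
    rw [if_neg (not_or.mpr ⟨h1, h2⟩)] at hcc
    have h0 : colorSeqN z x ⟨u.val % k, mod_bound hk u.val⟩ ⟨v.val % k, mod_bound hk v.val⟩
        = 0 := by exact_mod_cast hcc
    exact color_zero x _ _ h0 u v (Fin.ext (hz u)) (Fin.ext (hz v))
  have hAVmod : ∀ i : ℕ, AV hk (i % k) = AV hk i :=
    fun i => Fin.ext (Nat.mod_mod_of_dvd i dvd_rfl)
  have hBVmod : ∀ i : ℕ, BV hk (i % k) = BV hk i :=
    fun i => Fin.ext (by rw [BV_val, BV_val, Nat.mod_mod_of_dvd i dvd_rfl])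
  have Hc : ∀ i : ℕ, entN x (AV hk i) (AV hk (i+1)) + entN x (AV hk i) (BV hk (i+1))
      + entN x (BV hk i) (AV hk (i+1)) + entN x (BV hk i) (BV hk (i+1)) = 2 := by
    intro i
    have hij : (⟨i % k, mod_bound hk i⟩ : Fin k) ≠ ⟨(i+1) % k, mod_bound hk (i+1)⟩ := by
      intro h
      exact succ_mod_ne hk i (congrArg Fin.val h).symm
    have hform := color_formula hk hz x ⟨i % k, mod_bound hk i⟩
      ⟨(i+1) % k, mod_bound hk (i+1)⟩ hij
    rw [hAVmod i, hAVmod (i+1), hBVmod i, hBVmod (i+1)] at hform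
    have hval := hc ⟨i % k, mod_bound hk i⟩ ⟨(i+1) % k, mod_bound hk (i+1)⟩
    rw [if_pos (Or.inl (mod_succ hk i).symm)] at hval
    rw [hform] at hval
    exact_mod_cast hval
  have hrow : ∀ i : ℕ,
      (entN x (AV hk (i+1)) (AV hk i) + entN x (AV hk (i+1)) (BV hk i)
        + entN x (AV hk (i+1)) (AV hk (i+2)) + entN x (AV hk (i+1)) (BV hk (i+2)) = 3) ∧
      (entN x (BV hk (i+1)) (AV hk i) + entN x (BV hk (i+1)) (BV hk i)
        + entN x (BV hk (i+1)) (AV hk (i+2)) + entN x (BV hk (i+1)) (BV hk (i+2)) = 1) := by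
    intro i
    have h0 : ∀ (u : Fin (2*k)), u.val % k = (i+1) % k → ∀ v : Fin (2*k),
        v.val % k ≠ i % k → v.val % k ≠ (i+2) % k → entN x u v = 0 := by
      intro u hu v h1 h2
      apply czero
      · rw [hu, ← mod_succ hk (i+1), show i + 1 + 1 = i + 2 by omega]
        exact fun hcontra => h2 hcontra.symm
      · rw [hu]
        intro hcontra
        exact h1 (succ_mod_inj hk (mod_bound hk v.val) (mod_bound hk i)
          (hcontra.trans (mod_succ hk i)))
    constructor
    · have hdfA := deg_formula hk x (AV hk (i+1)) i
        (h0 (AV hk (i+1)) (by rw [AV_val]; exact Nat.mod_mod_of_dvd _ dvd_rfl))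
      have hvalA := hd (AV hk (i+1))
      rw [if_pos (show (AV hk (i+1)).val < k from mod_bound hk (i+1))] at hvalA
      rw [hdfA] at hvalA
      exact_mod_cast hvalA
    · have hdfB := deg_formula hk x (BV hk (i+1)) i
        (h0 (BV hk (i+1)) (by rw [BV_val, mod_period hk]; exact Nat.mod_mod_of_dvd _ dvd_rfl))
      have hvalB := hd (BV hk (i+1))
      rw [if_neg (show ¬((BV hk (i+1)).val < k) by rw [BV_val]; omega)] at hvalB
      rw [hdfB] at hvalB
      exact_mod_cast hvalB
  have Hd1 : ∀ i : ℕ, entN x (AV hk i) (AV hk (i+1)) + entN x (BV hk i) (AV hk (i+1))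
      + entN x (AV hk (i+1)) (AV hk (i+2)) + entN x (AV hk (i+1)) (BV hk (i+2)) = 3 := by
    intro i
    have h := (hrow i).1
    rwa [entN_symm x (AV hk (i+1)) (AV hk i), entN_symm x (AV hk (i+1)) (BV hk i)] at h
  have Hd2 : ∀ i : ℕ, entN x (AV hk i) (BV hk (i+1)) + entN x (BV hk i) (BV hk (i+1))
      + entN x (BV hk (i+1)) (AV hk (i+2)) + entN x (BV hk (i+1)) (BV hk (i+2)) = 1 := by
    intro i
    have h := (hrow i).2
    rwa [entN_symm x (BV hk (i+1)) (AV hk i), entN_symm x (BV hk (i+1)) (BV hk i)] at h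
  obtain ⟨E1, hE1⟩ : ∃ f : ℕ → ℕ, ∀ i, f i = entN x (AV hk i) (AV hk (i+1)) :=
    ⟨_, fun _ => rfl⟩
  obtain ⟨E2, hE2⟩ : ∃ f : ℕ → ℕ, ∀ i, f i = entN x (AV hk i) (BV hk (i+1)) :=
    ⟨_, fun _ => rfl⟩
  obtain ⟨E3, hE3⟩ : ∃ f : ℕ → ℕ, ∀ i, f i = entN x (BV hk i) (AV hk (i+1)) :=
    ⟨_, fun _ => rfl⟩
  obtain ⟨E4, hE4⟩ : ∃ f : ℕ → ℕ, ∀ i, f i = entN x (BV hk i) (BV hk (i+1)) :=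
    ⟨_, fun _ => rfl⟩
  have hAVper : ∀ m : ℕ, AV hk (m+k) = AV hk m := fun m => Fin.ext (mod_period hk m)
  have hBVper : ∀ m : ℕ, BV hk (m+k) = BV hk m :=
    fun m => Fin.ext (by rw [BV_val, BV_val, mod_period hk])
  have hp1 : ∀ i, E1 (i+k) = E1 i := fun i => by
    rw [hE1 (i+k), hE1 i, show i+k+1 = (i+1)+k by omega, hAVper, hAVper]
  have hp2 : ∀ i, E2 (i+k) = E2 i := fun i => by
    rw [hE2 (i+k), hE2 i, show i+k+1 = (i+1)+k by omega, hAVper, hBVper]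
  have hb1 : ∀ i, E1 i ≤ 1 := fun i => by rw [hE1 i]; exact hble _ _
  have hb2 : ∀ i, E2 i ≤ 1 := fun i => by rw [hE2 i]; exact hble _ _
  have hb3 : ∀ i, E3 i ≤ 1 := fun i => by rw [hE3 i]; exact hble _ _
  have hb4 : ∀ i, E4 i ≤ 1 := fun i => by rw [hE4 i]; exact hble _ _
  have HcE : ∀ i, E1 i + E2 i + E3 i + E4 i = 2 := fun i => by
    rw [hE1 i, hE2 i, hE3 i, hE4 i]; exact Hc i
  have Hd1E : ∀ i, E1 i + E3 i + E1 (i+1) + E2 (i+1) = 3 := fun i => by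
    rw [hE1 i, hE3 i, hE1 (i+1), hE2 (i+1)]; exact Hd1 i
  have Hd2E : ∀ i, E2 i + E4 i + E3 (i+1) + E4 (i+1) = 1 := fun i => by
    rw [hE2 i, hE4 i, hE3 (i+1), hE4 (i+1)]; exact Hd2 i
  have hstep : ∀ i, E1 i + E2 i = 2 → E1 (i+1) + E2 (i+1) = 2 := by
    intro i h
    have g1 := HcE i; have g2 := Hd1E i
    have := hb1 i; have := hb2 i; have := hb3 i; have := hb4 i
    have := hb1 (i+1); have := hb2 (i+1)
    omega
  have hlow : ∀ i, 1 ≤ E1 i + E2 i := by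
    intro i
    have h := Hd1E (i + k - 1)
    rw [show i + k - 1 + 1 = i + k by omega, hp1 i, hp2 i] at h
    have := hb1 (i+k-1); have := hb3 (i+k-1)
    omega
  by_cases hall : ∀ i, E1 i + E2 i ≤ 1
  · right
    have hvals : ∀ i, E1 i = 1 ∧ E2 i = 0 ∧ E3 i = 1 ∧ E4 i = 0 := by
      intro i
      have g1 := Hd1E i; have g2 := HcE i
      have := hall i; have := hall (i+1); have := hlow i; have := hlow (i+1)
      have := hb1 i; have := hb2 i; have := hb3 i; have := hb4 i
      omega
    funext e
    rw [show x e = entN x e.1.1 e.1.2 from (entN_edge x e.2).symm]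
    exact edge_eval2 hk x czero
      (fun i => ((hE1 i).symm.trans (hvals i).1))
      (fun i => ((hE2 i).symm.trans (hvals i).2.1))
      (fun i => ((hE3 i).symm.trans (hvals i).2.2.1))
      (fun i => ((hE4 i).symm.trans (hvals i).2.2.2)) e.1.1 e.1.2 e.2
  · push_neg at hall
    obtain ⟨i₀, hi₀⟩ := hall
    left
    have hi2 : E1 i₀ + E2 i₀ = 2 := by have := hb1 i₀; have := hb2 i₀; omega
    have hchain : ∀ j, E1 (i₀ + j) + E2 (i₀ + j) = 2 := by
      intro j
      induction j with
      | zero => simpa using hi2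
      | succ n ih => exact hstep (i₀ + n) ih
    have hmul : ∀ t m, E1 (m + k*t) + E2 (m + k*t) = E1 m + E2 m := by
      intro t
      induction t with
      | zero => intro m; simp
      | succ n ih =>
          intro m
          rw [show m + k*(n+1) = (m + k) + k*n by ring, ih (m+k), hp1 m, hp2 m]
    have hall2 : ∀ m, E1 m + E2 m = 2 := by
      intro m
      have hle : i₀ ≤ m + k * i₀ :=
        le_trans (Nat.le_mul_of_pos_left i₀ (show 0 < k by omega)) (Nat.le_add_left _ _)
      have h := hchain (m + k * i₀ - i₀)
      rw [Nat.add_sub_cancel' hle, hmul i₀ m] at h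
      exact h
    have hvals : ∀ i, E1 i = 1 ∧ E2 i = 1 ∧ E3 i = 0 ∧ E4 i = 0 := by
      intro i
      have g1 := HcE i; have g2 := hall2 i
      have := hb1 i; have := hb2 i; have := hb3 i; have := hb4 i
      omega
    funext e
    rw [show x e = entN x e.1.1 e.1.2 from (entN_edge x e.2).symm]
    exact edge_eval1 hk x czero
      (fun i => ((hE1 i).symm.trans (hvals i).1))
      (fun i => ((hE2 i).symm.trans (hvals i).2.1))
      (fun i => ((hE3 i).symm.trans (hvals i).2.2.1))
      (fun i => ((hE4 i).symm.trans (hvals i).2.2.2)) e.1.1 e.1.2 e.2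
end Unique
section Norm
variable {k : ℕ}

lemma Ydiff_zero (k w v : ℕ) (hk : 3 ≤ k) (hw : w < 2*k) (hv : v < 2*k)
    (h1 : ¬(w < k ∧ k ≤ v ∧ (v = w+k+1 ∨ (w+1 = k ∧ v = k))))
    (h2 : ¬(v < k ∧ k ≤ w ∧ (w = v+k+1 ∨ (v+1 = k ∧ w = k))))
    (h3 : ¬(w < k ∧ k ≤ v ∧ (v+1 = w+k ∨ (w = 0 ∧ v+1 = 2*k))))
    (h4 : ¬(v < k ∧ k ≤ w ∧ (w+1 = v+k ∨ (v = 0 ∧ w+1 = 2*k)))) :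
    Y1 k w v = Y2 k w v := by
  rcases lt_or_ge w k with hwk | hwk <;> rcases lt_or_ge v k with hvk | hvk
  · rw [Y1_aa hwk hvk, Y2_aa hwk hvk]
  · rw [Y1_ab hwk hvk hv, Y2_ab hwk hvk hv, if_neg (by omega), if_neg (by omega)]
  · rw [Y1_ba hwk hw hvk, Y2_ba hwk hw hvk, if_neg (by omega), if_neg (by omega)]
  · rw [Y1_bb hwk hvk, Y2_bb hwk hvk]

lemma norm_inner (hk : 3 ≤ k) (u : Fin (2*k)) :
    ∑ v : Fin (2*k), |(Y1 k u.val v.val : ℤ) - (Y2 k u.val v.val : ℤ)| = 2 := by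
  have hu := modc hk u.isLt
  have hmb := mod_bound hk u.val
  have hsA := hsA_fact hk (u.val % k) hmb
  have hsB := hsB_fact hk (u.val % k) hmb
  have hbA := mod_bound hk (u.val % k + k - 1)
  have hbB := mod_bound hk (u.val % k + 1)
  rcases hu with ⟨h1, h2⟩ | ⟨h1, h2⟩
  · refine (sum_support_two _ (BV hk (u.val % k + 1)) (BV hk (u.val % k + k - 1)) ?_ ?_).trans ?_
    · apply BV_ne_BV hk; omega
    · intro v hv1 hv2
      have hv1' : v.val ≠ (u.val % k + 1) % k + k :=
        fun h => hv1 (Fin.ext (h.trans (BV_val hk _).symm))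
      have hv2' : v.val ≠ (u.val % k + k - 1) % k + k :=
        fun h => hv2 (Fin.ext (h.trans (BV_val hk _).symm))
      rw [Ydiff_zero k u.val v.val hk u.isLt v.isLt (by omega) (by omega) (by omega) (by omega),
        sub_self, abs_zero]
    · rw [BV_val, BV_val, Y1_ab h2 (by omega) (by omega), Y2_ab h2 (by omega) (by omega),
        Y1_ab h2 (by omega) (by omega), Y2_ab h2 (by omega) (by omega),
        if_pos (by omega), if_neg (by omega), if_neg (by omega), if_pos (by omega)]
      norm_num
  · refine (sum_support_two _ (AV hk (u.val % k + k - 1)) (AV hk (u.val % k + 1)) ?_ ?_).trans ?_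
    · apply AV_ne_AV hk; omega
    · intro v hv1 hv2
      have hv1' : v.val ≠ (u.val % k + k - 1) % k :=
        fun h => hv1 (Fin.ext (h.trans (AV_val hk _).symm))
      have hv2' : v.val ≠ (u.val % k + 1) % k :=
        fun h => hv2 (Fin.ext (h.trans (AV_val hk _).symm))
      rw [Ydiff_zero k u.val v.val hk u.isLt v.isLt (by omega) (by omega) (by omega) (by omega),
        sub_self, abs_zero]
    · rw [AV_val, AV_val, Y1_ba (by omega) u.isLt (by omega), Y2_ba (by omega) u.isLt (by omega),
        Y1_ba (by omega) u.isLt (by omega), Y2_ba (by omega) u.isLt (by omega),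
        if_pos (by omega), if_neg (by omega), if_neg (by omega), if_pos (by omega)]
      norm_num

lemma norm_diff (hk : 3 ≤ k) :
    norm1 (fun e : Edge (2*k) => (gam1 k e : ℤ) - (gam2 k e : ℤ)) = 2 * (k : ℤ) := by
  have hsym : ∀ u v : Fin (2*k), |(Y1 k u.val v.val : ℤ) - (Y2 k u.val v.val : ℤ)|
      = |(Y1 k v.val u.val : ℤ) - (Y2 k v.val u.val : ℤ)| := by
    intro u v; rw [Y1_symm, Y2_symm]
  have hdiag : ∀ u : Fin (2*k), |(Y1 k u.val u.val : ℤ) - (Y2 k u.val u.val : ℤ)| = 0 := by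
    intro u; rw [Y1_diag hk, Y2_diag hk]; norm_num
  have hs := sum_sym (fun u v : Fin (2*k) => |(Y1 k u.val v.val : ℤ) - (Y2 k u.val v.val : ℤ)|)
    hsym hdiag
  have hedge : (∑ e : Edge (2*k), |(Y1 k e.1.1.val e.1.2.val : ℤ) - (Y2 k e.1.1.val e.1.2.val : ℤ)|)
      = norm1 (fun e : Edge (2*k) => (gam1 k e : ℤ) - (gam2 k e : ℤ)) := rfl
  have hinner : (∑ u : Fin (2*k), ∑ v : Fin (2*k),
      |(Y1 k u.val v.val : ℤ) - (Y2 k u.val v.val : ℤ)|) = 2 * (2 * (k:ℤ)) := by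
    rw [Finset.sum_congr rfl (fun u _ => norm_inner hk u), Finset.sum_const,
      Finset.card_univ, Fintype.card_fin]
    push_cast
    ring
  rw [hedge, hinner] at hs
  omega
end Norm
theorem simple_fiber_with_two_elements (k : ℕ) (hk : 3 ≤ k) :
    ∃ γ₁ γ₂ : Edge (2 * k) → ℕ, γ₁ ≠ γ₂ ∧
      SimpleFiber (fun u : Fin (2 * k) => (⟨u.val % k, Nat.mod_lt _ (by omega)⟩ : Fin k))
        (fun u : Fin (2 * k) => if u.val < k then 3 else 1)
        (fun i j : Fin k =>
          if (i.val + 1) % k = j.val ∨ (j.val + 1) % k = i.val then 2 else 0)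
        = {γ₁, γ₂} ∧
      norm1 (fun e => (γ₁ e : ℤ) - (γ₂ e : ℤ)) = 2 * k := by
  have hzz : ∀ u : Fin (2*k),
      ((fun u : Fin (2 * k) => (⟨u.val % k, Nat.mod_lt _ (by omega)⟩ : Fin k)) u).val
        = u.val % k := fun u => rfl
  refine ⟨gam1 k, gam2 k, ?_, ?_, ?_⟩
  · intro h
    have he : (0:ℕ) < k + 1 := by omega
    have hcontra := congrFun h
      ⟨(⟨0, by omega⟩, ⟨k+1, by omega⟩), Fin.mk_lt_mk.mpr he⟩
    have h1 : gam1 k ⟨(⟨0, by omega⟩, ⟨k+1, by omega⟩), Fin.mk_lt_mk.mpr he⟩ = 1 := by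
      show Y1 k 0 (k+1) = 1
      rw [Y1_ab (by omega) (by omega) (by omega), if_pos (by omega)]
    have h2 : gam2 k ⟨(⟨0, by omega⟩, ⟨k+1, by omega⟩), Fin.mk_lt_mk.mpr he⟩ = 0 := by
      show Y2 k 0 (k+1) = 0
      rw [Y2_ab (by omega) (by omega) (by omega), if_neg (by omega)]
    rw [h1, h2] at hcontra
    exact one_ne_zero hcontra
  · ext γ
    simp only [SimpleFiber, Fiber, Set.mem_setOf_eq, Set.mem_insert_iff,
      Set.mem_singleton_iff]
    constructor
    · rintro ⟨⟨hdeg, hcol⟩, hbnd⟩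
      exact fiber_unique hk hzz γ hdeg hcol hbnd
    · rintro (rfl | rfl)
      · exact ⟨⟨fun u => gam1_deg hk u, fun i j => gam1_color hk hzz i j⟩, gam1_le_one k⟩
      · exact ⟨⟨fun u => gam2_deg hk u, fun i j => gam2_color hk hzz i j⟩, gam2_le_one k⟩
  · have := norm_diff hk
    omega
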